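/- Let A ⊆ ℝ^d be compact and t > 0. If x₁,…,x_J ∈ M_t(A) are points such that the open balls B(x_j, t) are pairwise disjoint, then the volume of A_t \ A is at least J · κ_lens · t^d, where κ_lens is the volume of the intersection of two unit balls whose centers are at distance 1. Here A_t denotes the closed t-neighborhood of A and M_t(A) is the set of boundary points admitting a normal direction with local reach greater than t. -/

import Mathlib

open Metric MeasureTheory Filter Set Topology
open scoped ENNReal
open scoped Pointwise

noncomputable section

/-- `uniqueNearest A y x` : `x` is the unique nearest point of `y` in `A`. -/
def uniqueNearest {d : ℕ} (A : Set (EuclideanSpace ℝ (Fin d)))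
    (y x : EuclideanSpace ℝ (Fin d)) : Prop :=
  x ∈ A ∧ dist y x = Metric.infDist y A ∧ ∀ a ∈ A, dist y a = Metric.infDist y A → a = x

/-- The local reach `δ(A,x,u)`. -/
def localReach {d : ℕ} (A : Set (EuclideanSpace ℝ (Fin d)))
    (x u : EuclideanSpace ℝ (Fin d)) : ℝ≥0∞ :=
  ⨆ (s : ℝ) (_ : 0 ≤ s ∧ uniqueNearest A (x + s • u) x), ENNReal.ofReal s

/-- `M_t(A)`. -/
def reachSet {d : ℕ} (A : Set (EuclideanSpace ℝ (Fin d))) (t : ℝ) :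
    Set (EuclideanSpace ℝ (Fin d)) :=
  {x | x ∈ frontier A ∧ ∃ u : EuclideanSpace ℝ (Fin d), ‖u‖ = 1 ∧
    ENNReal.ofReal t < localReach A x u}

set_option linter.unnecessarySimpa false in
lemma lens_volume (d : ℕ) (hd : 0 < d) (t : ℝ) (ht : 0 < t)
    (c u : EuclideanSpace ℝ (Fin d)) (hu : ‖u‖ = 1) :
    volume (Metric.ball c t ∩ Metric.ball (c + t • u) t) =
      volume (Metric.ball (0 : EuclideanSpace ℝ (Fin d)) 1 ∩
        Metric.ball (EuclideanSpace.single (⟨0, hd⟩ : Fin d) (1 : ℝ)) 1) *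
        ENNReal.ofReal (t ^ d) := by
  set e₁ : EuclideanSpace ℝ (Fin d) := EuclideanSpace.single (⟨0, hd⟩ : Fin d) (1 : ℝ) with he₁
  have hne : ‖e₁‖ = 1 := by simp [he₁, EuclideanSpace.norm_single]
  set R : EuclideanSpace ℝ (Fin d) ≃ₗᵢ[ℝ] EuclideanSpace ℝ (Fin d) :=
    Submodule.reflection (ℝ ∙ (e₁ - u))ᗮ with hR
  have hRe : R e₁ = u := Submodule.reflection_sub (by rw [hne, hu])
  have himg : Metric.ball c t ∩ Metric.ball (c + t • u) t =
      c +ᵥ (t • (R '' (Metric.ball 0 1 ∩ Metric.ball e₁ 1))) := by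
    rw [image_inter R.injective]
    have h1 : R '' Metric.ball 0 1 = Metric.ball 0 1 := by
      simpa using R.toIsometryEquiv.image_ball 0 1
    have h2 : R '' Metric.ball e₁ 1 = Metric.ball u 1 := by
      simpa [hRe] using R.toIsometryEquiv.image_ball e₁ 1
    rw [h1, h2, smul_set_inter₀ (ne_of_gt ht), _root_.smul_ball (ne_of_gt ht),
      _root_.smul_ball (ne_of_gt ht), smul_zero, Real.norm_eq_abs, abs_of_pos ht, mul_one,
      vadd_set_inter, vadd_ball, vadd_ball]
    simp [vadd_eq_add]
  have hRim : volume (R '' (Metric.ball (0:EuclideanSpace ℝ (Fin d)) 1 ∩ Metric.ball e₁ 1))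
      = volume (Metric.ball (0:EuclideanSpace ℝ (Fin d)) 1 ∩ Metric.ball e₁ 1) := by
    rw [R.image_eq_preimage_symm]
    exact R.symm.measurePreserving.measure_preimage
      ((isOpen_ball.inter isOpen_ball).measurableSet.nullMeasurableSet)
  rw [himg, measure_vadd, Measure.addHaar_smul, hRim,
    finrank_euclideanSpace_fin, abs_of_pos (pow_pos ht d), mul_comm]


set_option maxHeartbeats 1000000 in
/-- if `x₁,…,x_J ∈ M_t(A)` have pairwise disjoint open balls `B(x_j,t)`,
then `vol(A_t \ A) ≥ J · κ_lens · t^d`, where `κ_lens` is the volume of the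
intersection of two unit balls at distance `1`. -/
theorem volume_lower_bound_of_packing (d J : ℕ) (hd : 0 < d)
    (A : Set (EuclideanSpace ℝ (Fin d))) (hA : IsCompact A) (hne : A.Nonempty)
    (t : ℝ) (ht : 0 < t) (x : Fin J → EuclideanSpace ℝ (Fin d))
    (hx : ∀ j, x j ∈ reachSet A t)
    (hdisj : Pairwise fun i j => Disjoint (Metric.ball (x i) t) (Metric.ball (x j) t)) :
    (J : ℝ≥0∞) *
        volume (Metric.ball (0 : EuclideanSpace ℝ (Fin d)) 1 ∩
          Metric.ball (EuclideanSpace.single (⟨0, hd⟩ : Fin d) (1 : ℝ)) 1) *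
        ENNReal.ofReal (t ^ d) ≤
      volume (Metric.cthickening t A \ A) := by
  have hclosed : IsClosed A := hA.isClosed
  choose u hu hlt using fun j => (hx j).2
  -- extract witnesses s j > t with unique nearest point
  have hsw : ∀ j, ∃ s : ℝ, (0 ≤ s ∧ uniqueNearest A (x j + s • u j) (x j)) ∧ t < s := by
    intro j
    have := hlt j
    rw [localReach, lt_iSup_iff] at this
    obtain ⟨s, hs⟩ := this
    rw [lt_iSup_iff] at hs
    obtain ⟨hP, hlt'⟩ := hs
    refine ⟨s, hP, ?_⟩
    have h0 : (0:ℝ≥0∞) < ENNReal.ofReal s := lt_trans (by positivity) hlt'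
    rw [ENNReal.ofReal_lt_ofReal_iff (ENNReal.ofReal_pos.mp h0)] at hlt'
    exact hlt'
  choose s hs hts using hsw
  set lens : Fin J → Set (EuclideanSpace ℝ (Fin d)) :=
    fun j => Metric.ball (x j) t ∩ Metric.ball (x j + t • u j) t with hlens
  have hxA : ∀ j, x j ∈ A := fun j => hclosed.frontier_subset (hx j).1
  -- each lens is inside cthickening t A \ A
  have hsub : ∀ j, lens j ⊆ Metric.cthickening t A \ A := by
    intro j y hy
    obtain ⟨hy1, hy2⟩ := hy
    constructor
    · exact mem_cthickening_of_dist_le y (x j) t A (hxA j) (le_of_lt hy1)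
    · intro hyA
      -- unique nearest: dist (x j + s • u j) (x j) = infDist = s j
      obtain ⟨hs0, hxmem, hdeq, _⟩ := hs j
      have hnorm : dist (x j + s j • u j) (x j) = s j := by
        rw [dist_eq_norm, add_sub_cancel_left, norm_smul, hu j, Real.norm_eq_abs,
          abs_of_nonneg hs0, mul_one]
      have hinf : Metric.infDist (x j + s j • u j) A = s j := by rw [← hdeq, hnorm]
      have h1 : s j ≤ dist (x j + s j • u j) y := by
        have h := Metric.infDist_le_dist_of_mem (x := x j + s j • u j) hyA
        rwa [hinf] at h
      have h2 : dist (x j + s j • u j) (x j + t • u j) = s j - t := by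
        rw [dist_eq_norm]
        have : (x j + s j • u j) - (x j + t • u j) = (s j - t) • u j := by
          rw [sub_smul]; abel
        rw [this, norm_smul, hu j, Real.norm_eq_abs,
          abs_of_nonneg (le_of_lt (sub_pos.mpr (hts j))), mul_one]
      have h3 : dist (x j + s j • u j) y ≤ (s j - t) + dist (x j + t • u j) y :=
        (dist_triangle _ (x j + t • u j) y).trans (by rw [h2])
      have h4 : dist (x j + t • u j) y < t := by rw [dist_comm]; exact mem_ball.mp hy2
      linarith
  -- lenses are pairwise disjoint and measurable
  have hld : Pairwise (Function.onFun Disjoint lens) := fun i j hij =>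
    ((hdisj hij).mono inter_subset_left inter_subset_left)
  have hlm : ∀ j, MeasurableSet (lens j) :=
    fun j => (isOpen_ball.inter isOpen_ball).measurableSet
  have hvol : ∀ j, volume (lens j) =
      volume (Metric.ball (0 : EuclideanSpace ℝ (Fin d)) 1 ∩
        Metric.ball (EuclideanSpace.single (⟨0, hd⟩ : Fin d) (1 : ℝ)) 1) *
        ENNReal.ofReal (t ^ d) :=
    fun j => lens_volume d hd t ht (x j) (u j) (hu j)
  calc (J : ℝ≥0∞) * volume (Metric.ball (0 : EuclideanSpace ℝ (Fin d)) 1 ∩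
          Metric.ball (EuclideanSpace.single (⟨0, hd⟩ : Fin d) (1 : ℝ)) 1) *
        ENNReal.ofReal (t ^ d)
      = ∑' j : Fin J, volume (lens j) := by
        simp only [hvol, tsum_fintype, Finset.sum_const, Finset.card_univ, Fintype.card_fin,
          nsmul_eq_mul, mul_assoc]
    _ = volume (⋃ j, lens j) := (measure_iUnion hld hlm).symm
    _ ≤ volume (Metric.cthickening t A \ A) := measure_mono (iUnion_subset hsub)
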